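/- Let m ≥ 1 be an integer, t and C real numbers, and define β : ℝ^{m+1} → ℝ by β(x₁,…,x_{m+1}) = (Σᵢ₌₁^{m+1} xᵢ + C)^t on the region {Σᵢ₌₁^{m+1} xᵢ + C > 0}. Then for every point x of this region and all vectors X, Y ∈ ℝ^{m+1}, Σᵢ₌₁^{m+1} Σⱼ₌₁^{m+1} (XᵢXⱼ + YᵢYⱼ)·β(x)·∂ᵢ∂ⱼβ(x) − Σᵢ₌₁^{m+1} (∂ᵢβ(x))² = (((Σᵢ₌₁^{m+1} Xᵢ)² + (Σᵢ₌₁^{m+1} Yᵢ)²)·t(t−1) − (m+1)·t²)·(Σᵢ₌₁^{m+1} xᵢ + C)^{2t−2}. Moreover, if 0 < t < 1, this quantity is strictly negative for all X, Y ∈ ℝ^{m+1}. -/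

import Mathlib

/-- The partial derivative of `f : ℝⁿ → ℝ` in the `i`-th coordinate direction. -/
noncomputable def pd {n : ℕ} (i : Fin n) (f : (Fin n → ℝ) → ℝ) : (Fin n → ℝ) → ℝ :=
  fun x => deriv (fun s : ℝ => f (Function.update x i s)) (x i)

open Finset Filter

lemma sum_update' {n : ℕ} (x : Fin n → ℝ) (i : Fin n) (s : ℝ) :
    ∑ k, Function.update x i s k = s + (∑ k, x k - x i) := by
  rw [Finset.sum_update_of_mem (Finset.mem_univ i), Finset.sdiff_singleton_eq_erase,
    Finset.sum_erase_eq_sub (Finset.mem_univ i)]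

lemma deriv_shift (c a p s : ℝ) (h : 0 < s + a) :
    deriv (fun y : ℝ => c * (y + a) ^ p) s = c * (p * (s + a) ^ (p - 1)) := by
  have h1 : HasDerivAt (fun y : ℝ => c * (y + a) ^ p)
      (c * (p * (s + a) ^ (p - 1) * 1)) s :=
    by
      have hr : HasDerivAt (fun y : ℝ => y ^ p) (p * (s + a) ^ (p - 1)) (s + a) :=
        Real.hasDerivAt_rpow_const (p := p) (Or.inl h.ne')
      have hl : HasDerivAt (fun y : ℝ => y + a) 1 s := (hasDerivAt_id' (x := s)).add_const a
      exact (hr.comp s hl).const_mul c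
  simpa using h1.deriv

lemma pd_of_eqOn {n : ℕ} (C : ℝ) (f g : (Fin n → ℝ) → ℝ)
    (hfg : ∀ y : Fin n → ℝ, 0 < (∑ k, y k) + C → f y = g y)
    (i : Fin n) (x : Fin n → ℝ) (hx : 0 < (∑ k, x k) + C) :
    pd i f x = pd i g x := by
  unfold pd
  apply Filter.EventuallyEq.deriv_eq
  have hcont : Continuous (fun s : ℝ => (∑ k, Function.update x i s k) + C) := by
    simp only [sum_update']
    fun_prop
  have h0 : 0 < (∑ k, Function.update x i (x i) k) + C := by
    rwa [Function.update_eq_self]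
  have := hcont.continuousAt.preimage_mem_nhds (Ioi_mem_nhds h0)
  filter_upwards [this] with s hs
  exact hfg _ hs

lemma pd_rpow {n : ℕ} (C c p : ℝ) (i : Fin n) (x : Fin n → ℝ)
    (hx : 0 < (∑ k, x k) + C) :
    pd i (fun y => c * ((∑ k, y k) + C) ^ p) x
      = c * (p * ((∑ k, x k) + C) ^ (p - 1)) := by
  unfold pd
  have e : (fun s : ℝ => c * ((∑ k, Function.update x i s k) + C) ^ p)
      = fun s : ℝ => c * (s + ((∑ k, x k) - x i + C)) ^ p := by
    funext s
    rw [sum_update']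
    ring_nf
  rw [e, deriv_shift c _ p (x i) (by linarith)]
  ring_nf


/-- Let `m ≥ 1` be an integer, `t, C` real, and
`β(x₁,…,x_{m+1}) = (Σᵢ xᵢ + C)^t` on the region `{Σᵢ xᵢ + C > 0}`. Then for
every point `x` of the region and all `X, Y ∈ ℝ^{m+1}`,
`Σᵢ Σⱼ (XᵢXⱼ + YᵢYⱼ) β(x) ∂ᵢ∂ⱼβ(x) − Σᵢ (∂ᵢβ(x))²
 = (((ΣᵢXᵢ)² + (ΣᵢYᵢ)²) t(t−1) − (m+1)t²)(Σᵢ xᵢ + C)^{2t−2}`.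
Moreover, if `0 < t < 1`, this quantity is strictly negative for all `X, Y`. -/
theorem stmt10 (m : ℕ) (hm : 1 ≤ m) (t C : ℝ)
    (β : (Fin (m + 1) → ℝ) → ℝ)
    (hβ : ∀ x : Fin (m + 1) → ℝ, 0 < (∑ i : Fin (m + 1), x i) + C →
      β x = ((∑ i : Fin (m + 1), x i) + C) ^ t) :
    ∀ x : Fin (m + 1) → ℝ, 0 < (∑ i : Fin (m + 1), x i) + C →
      ∀ X Y : Fin (m + 1) → ℝ,
        ((∑ i : Fin (m + 1), ∑ j : Fin (m + 1),
              (X i * X j + Y i * Y j) * β x * pd i (pd j β) x)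
            - ∑ i : Fin (m + 1), (pd i β x) ^ 2
          = (((∑ i : Fin (m + 1), X i) ^ 2 + (∑ i : Fin (m + 1), Y i) ^ 2) * (t * (t - 1))
                - ((m : ℝ) + 1) * t ^ 2) *
              ((∑ i : Fin (m + 1), x i) + C) ^ (2 * t - 2))
        ∧ (0 < t → t < 1 →
            (∑ i : Fin (m + 1), ∑ j : Fin (m + 1),
                (X i * X j + Y i * Y j) * β x * pd i (pd j β) x)
              - ∑ i : Fin (m + 1), (pd i β x) ^ 2 < 0) := by
  intro x hx X Y
  set u : ℝ := (∑ i : Fin (m + 1), x i) + C with hu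
  have hβpd : ∀ (j : Fin (m + 1)) (y : Fin (m + 1) → ℝ), 0 < (∑ k, y k) + C →
      pd j β y = t * ((∑ k, y k) + C) ^ (t - 1) := by
    intro j y hy
    rw [pd_of_eqOn C β (fun z => 1 * ((∑ k, z k) + C) ^ t)
      (fun z hz => by rw [hβ z hz]; ring) j y hy,
      pd_rpow C 1 t j y hy]
    ring
  have h2 : ∀ i j : Fin (m + 1), pd i (pd j β) x = t * ((t - 1) * u ^ (t - 2)) := by
    intro i j
    rw [pd_of_eqOn C (pd j β) (fun z => t * ((∑ k, z k) + C) ^ (t - 1))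
      (fun z hz => hβpd j z hz) i x hx,
      pd_rpow C t (t - 1) i x hx, show t - 1 - 1 = t - 2 by ring]
  have h1 : ∀ i : Fin (m + 1), pd i β x = t * u ^ (t - 1) := fun i => hβpd i x hx
  have hβx : β x = u ^ t := hβ x hx
  have hA : u ^ t * u ^ (t - 2) = u ^ (2 * t - 2) := by
    rw [← Real.rpow_add hx]; congr 1; ring
  have hB : u ^ (t - 1) * u ^ (t - 1) = u ^ (2 * t - 2) := by
    rw [← Real.rpow_add hx]; congr 1; ring
  have key : (∑ i : Fin (m + 1), ∑ j : Fin (m + 1),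
        (X i * X j + Y i * Y j) * β x * pd i (pd j β) x)
      - ∑ i : Fin (m + 1), (pd i β x) ^ 2
    = (((∑ i : Fin (m + 1), X i) ^ 2 + (∑ i : Fin (m + 1), Y i) ^ 2) * (t * (t - 1))
          - ((m : ℝ) + 1) * t ^ 2) * u ^ (2 * t - 2) := by
    simp only [h1, h2, hβx]
    have e1 : ∀ i j : Fin (m + 1),
        (X i * X j + Y i * Y j) * u ^ t * (t * ((t - 1) * u ^ (t - 2)))
        = (X i * X j + Y i * Y j) * (t * (t - 1) * (u ^ t * u ^ (t - 2))) := by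
      intro i j; ring
    simp only [e1, hA, ← Finset.sum_mul]
    have e2 : ∑ i : Fin (m + 1), ∑ j : Fin (m + 1), (X i * X j + Y i * Y j)
        = (∑ i : Fin (m + 1), X i) ^ 2 + (∑ i : Fin (m + 1), Y i) ^ 2 := by
      simp only [Finset.sum_add_distrib, ← Finset.mul_sum, ← Finset.sum_mul]
      ring
    rw [e2]
    have e3 : ∑ i : Fin (m + 1), (t * u ^ (t - 1)) ^ 2
        = ((m : ℝ) + 1) * (t ^ 2 * u ^ (2 * t - 2)) := by
      rw [Finset.sum_const, Finset.card_univ, Fintype.card_fin]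
      push_cast
      rw [← hB]; ring
    rw [e3]
    ring
  refine ⟨key, fun ht0 ht1 => ?_⟩
  rw [key]
  apply mul_neg_of_neg_of_pos
  · have h3 : t * (t - 1) < 0 := mul_neg_of_pos_of_neg ht0 (by linarith)
    have h4 : (0:ℝ) ≤ (∑ i : Fin (m + 1), X i) ^ 2 + (∑ i : Fin (m + 1), Y i) ^ 2 := by positivity
    nlinarith [sq_nonneg t, mul_nonpos_of_nonneg_of_nonpos h4 h3.le]
  · exact Real.rpow_pos_of_pos hx _
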